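/- Let Ω be a family of pairs of supports and Σ_Ω the associated constraint set. If (X,Y) ∈ Σ_Ω is a PS-unique factorization of XYᵀ in Σ_Ω, then for every pair of supports (S_L, S_R) ∈ Ω with supp(X) ⊆ S_L and supp(Y) ⊆ S_R, we have colsupp(X) = colsupp(S_L) and colsupp(Y) = colsupp(S_R). -/

import Mathlib

open Matrix

def IsGenPerm {r : ℕ} (G : Matrix (Fin r) (Fin r) ℂ) : Prop :=
  ∃ (σ : Equiv.Perm (Fin r)) (d : Fin r → ℂ),
    (∀ i, d i ≠ 0) ∧ ∀ i j, G i j = if i = σ j then d i else 0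

def PSEquiv {m n r : ℕ}
    (p q : Matrix (Fin m) (Fin r) ℂ × Matrix (Fin n) (Fin r) ℂ) : Prop :=
  ∃ G, IsGenPerm G ∧ q.1 = p.1 * G ∧ q.2 = p.2 * (G⁻¹)ᵀ

def PSUniqueSet {m n r : ℕ}
    (Sig : Set (Matrix (Fin m) (Fin r) ℂ × Matrix (Fin n) (Fin r) ℂ)) :
    Set (Matrix (Fin m) (Fin r) ℂ × Matrix (Fin n) (Fin r) ℂ) :=
  {p | p ∈ Sig ∧ ∀ q ∈ Sig, q.1 * q.2ᵀ = p.1 * p.2ᵀ → PSEquiv p q}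

/-- The support of a matrix is contained in the (binary) support `S`. -/
def SuppSub {a b : ℕ} (X : Matrix (Fin a) (Fin b) ℂ) (S : Set (Fin a × Fin b)) : Prop :=
  ∀ i j, X i j ≠ 0 → (i, j) ∈ S

/-- The column support of a matrix: indices of its nonzero columns. -/
def Colsupp {a b : ℕ} (X : Matrix (Fin a) (Fin b) ℂ) : Set (Fin b) :=
  {j | ∃ i, X i j ≠ 0}

/-- The column support of a support (set of index pairs). -/
def ColsuppS {a b : ℕ} (S : Set (Fin a × Fin b)) : Set (Fin b) :=
  {j | ∃ i, (i, j) ∈ S}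

/-- The constraint set Σ_Ω associated with a family of pairs of supports. -/
def SigmaOm {m n r : ℕ} (Om : Set (Set (Fin m × Fin r) × Set (Fin n × Fin r))) :
    Set (Matrix (Fin m) (Fin r) ℂ × Matrix (Fin n) (Fin r) ℂ) :=
  {p | ∃ S ∈ Om, SuppSub p.1 S.1 ∧ SuppSub p.2 S.2}


lemma keyA {r : ℕ} (σ : Equiv.Perm (Fin r)) (C : Finset (Fin r)) (j : Fin r)
    (hj : j ∉ C) (hσj : σ j ∈ C) (hiff : ∀ k, k ≠ j → (k ∈ C ↔ σ k ∈ C)) : False := by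
  have hD : C.image σ.symm = insert j C := by
    ext k
    simp only [Finset.mem_image, Finset.mem_insert]
    constructor
    · rintro ⟨x, hx, rfl⟩
      by_cases hkj : σ.symm x = j
      · exact Or.inl hkj
      · right
        rw [hiff _ hkj]
        simpa using hx
    · intro hk
      rcases hk with hk | hk
      · subst hk; exact ⟨σ k, hσj, σ.symm_apply_apply k⟩
      · exact ⟨σ k, (hiff k (by rintro rfl; exact hj hk)).mp hk, σ.symm_apply_apply k⟩
  have h1 : (C.image σ.symm).card = C.card := Finset.card_image_of_injective _ σ.symm.injective
  rw [hD, Finset.card_insert_of_notMem hj] at h1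
  omega

lemma genPerm_inv_transpose {r : ℕ} (G : Matrix (Fin r) (Fin r) ℂ)
    (σ : Equiv.Perm (Fin r)) (d : Fin r → ℂ) (hd : ∀ i, d i ≠ 0)
    (hG : ∀ i j, G i j = if i = σ j then d i else 0) :
    ∀ i j, (G⁻¹)ᵀ i j = if i = σ j then (d i)⁻¹ else 0 := by
  have hH : G⁻¹ = fun i k => if σ i = k then (d k)⁻¹ else 0 := by
    apply Matrix.inv_eq_left_inv
    ext a b
    show (∑ k, (if σ a = k then (d k)⁻¹ else 0) * G k b) = _
    simp only [Matrix.mul_apply, hG, ite_mul, zero_mul, mul_ite, mul_zero, Matrix.one_apply]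
    rw [Finset.sum_eq_single (σ a)]
    · by_cases hab : a = b
      · subst hab; simp [inv_mul_cancel₀ (hd (σ a))]
      · have : ¬ (σ a = σ b) := fun hc => hab (σ.injective hc)
        simp [this, hab]
    · intro k _ hk
      simp [Ne.symm hk]
    · simp
  intro i j
  rw [Matrix.transpose_apply, hH]
  by_cases hij : i = σ j
  · simp [hij]
  · show (if σ j = i then (d i)⁻¹ else 0) = _
    rw [if_neg (fun hc => hij hc.symm), if_neg hij]

lemma core {a r : ℕ} (Z Z' : Matrix (Fin a) (Fin r) ℂ) (σ : Equiv.Perm (Fin r))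
    (c : Fin r → ℂ) (hc : ∀ k, c k ≠ 0)
    (hmul : ∀ p b, Z' p b = Z p (σ b) * c (σ b))
    (j : Fin r) (i : Fin a)
    (hcol : ∀ p, Z p j = 0)
    (hnz : Z' i j ≠ 0)
    (hoth : ∀ p b, b ≠ j → Z' p b = Z p b) : False := by
  classical
  apply keyA σ (Finset.univ.filter (fun k => ∃ p, Z p k ≠ 0)) j
  · simp [hcol]
  · simp only [Finset.mem_filter, Finset.mem_univ, true_and]
    refine ⟨i, fun h0 => hnz ?_⟩
    rw [hmul, h0, zero_mul]
  · intro k hk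
    simp only [Finset.mem_filter, Finset.mem_univ, true_and]
    constructor
    · rintro ⟨p, hp⟩
      refine ⟨p, fun h0 => hp ?_⟩
      rw [← hoth p k hk, hmul, h0, zero_mul]
    · rintro ⟨p, hp⟩
      exact ⟨p, by rw [← hoth p k hk, hmul]; exact mul_ne_zero hp (hc _)⟩

theorem stmt4 {m n r : ℕ} (Om : Set (Set (Fin m × Fin r) × Set (Fin n × Fin r)))
    (X : Matrix (Fin m) (Fin r) ℂ) (Y : Matrix (Fin n) (Fin r) ℂ)
    (h : (X, Y) ∈ PSUniqueSet (SigmaOm Om)) :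
    ∀ S ∈ Om, SuppSub X S.1 → SuppSub Y S.2 →
      Colsupp X = ColsuppS S.1 ∧ Colsupp Y = ColsuppS S.2 := by
  intro S hS hX hY
  obtain ⟨hmem, huniq⟩ := h
  constructor
  · ext j
    simp only [Colsupp, ColsuppS, Set.mem_setOf_eq]
    constructor
    · rintro ⟨i, hi⟩; exact ⟨i, hX i j hi⟩
    · rintro ⟨i, hij⟩
      by_contra hcon
      push_neg at hcon
      let X' : Matrix (Fin m) (Fin r) ℂ := fun a b => if b = j then (if a = i then 1 else 0) else X a b
      let Y' : Matrix (Fin n) (Fin r) ℂ := fun a b => if b = j then 0 else Y a b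
      have hmemS : (X', Y') ∈ SigmaOm Om := by
        refine ⟨S, hS, ?_, ?_⟩
        · intro a b hab
          by_cases hb : b = j
          · subst hb
            by_cases ha : a = i
            · subst ha; exact hij
            · simp [X', ha] at hab
          · exact hX a b (by simpa [X', hb] using hab)
        · intro a b hab
          by_cases hb : b = j
          · simp [Y', hb] at hab
          · exact hY a b (by simpa [Y', hb] using hab)
      have hprod : X' * Y'ᵀ = X * Yᵀ := by
        ext a b
        simp only [Matrix.mul_apply, Matrix.transpose_apply]
        refine Finset.sum_congr rfl fun k _ => ?_
        by_cases hk : k = j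
        · subst hk; simp [X', Y', hcon a]
        · simp [X', Y', hk]
      obtain ⟨G, ⟨σ, d, hd, hG⟩, hXG, hYG⟩ := huniq (X', Y') hmemS hprod
      have hXG' : X' = X * G := hXG
      refine core X X' σ d hd ?_ j i hcon ?_ ?_
      · intro p b
        rw [hXG']
        simp only [Matrix.mul_apply, hG, mul_ite, mul_zero]
        rw [Finset.sum_ite_eq' Finset.univ (σ b) (fun k => X p k * d k)]
        simp
      · simp [X']
      · intro p b hb
        simp [X', hb]
  · ext j
    simp only [Colsupp, ColsuppS, Set.mem_setOf_eq]
    constructor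
    · rintro ⟨i, hi⟩; exact ⟨i, hY i j hi⟩
    · rintro ⟨i, hij⟩
      by_contra hcon
      push_neg at hcon
      let X' : Matrix (Fin m) (Fin r) ℂ := fun a b => if b = j then 0 else X a b
      let Y' : Matrix (Fin n) (Fin r) ℂ := fun a b => if b = j then (if a = i then 1 else 0) else Y a b
      have hmemS : (X', Y') ∈ SigmaOm Om := by
        refine ⟨S, hS, ?_, ?_⟩
        · intro a b hab
          by_cases hb : b = j
          · simp [X', hb] at hab
          · exact hX a b (by simpa [X', hb] using hab)
        · intro a b hab
          by_cases hb : b = j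
          · subst hb
            by_cases ha : a = i
            · subst ha; exact hij
            · simp [Y', ha] at hab
          · exact hY a b (by simpa [Y', hb] using hab)
      have hprod : X' * Y'ᵀ = X * Yᵀ := by
        ext a b
        simp only [Matrix.mul_apply, Matrix.transpose_apply]
        refine Finset.sum_congr rfl fun k _ => ?_
        by_cases hk : k = j
        · subst hk; simp [X', Y', hcon b]
        · simp [X', Y', hk]
      obtain ⟨G, ⟨σ, d, hd, hG⟩, hXG, hYG⟩ := huniq (X', Y') hmemS hprod
      have hYG' : Y' = Y * (G⁻¹)ᵀ := hYG
      have hT := genPerm_inv_transpose G σ d hd hG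
      refine core Y Y' σ (fun k => (d k)⁻¹) (fun k => inv_ne_zero (hd k)) ?_ j i hcon ?_ ?_
      · intro p b
        rw [hYG']
        simp only [Matrix.mul_apply, hT, mul_ite, mul_zero]
        rw [Finset.sum_ite_eq' Finset.univ (σ b) (fun k => Y p k * (d k)⁻¹)]
        simp
      · simp [Y']
      · intro p b hb
        simp [Y', hb]
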